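/- Under the truncation model, for every x > 0 with 𝐅(x) > 0, Woodroofe's identity holds: ∫_{(x,∞)} (1/𝐅(z)) dμ_𝐅(z) = ∫_{(x,∞)} (1/C(z)) dμ_F(z), where C(z) := F(z) − G(z) and μ_F is the Lebesgue–Stieltjes measure of F; consequently 𝐅(x) = exp( −∫_{(x,∞)} (1/C(z)) dμ_F(z) ). -/

import Mathlib

open MeasureTheory Filter Set Real
open scoped ENNReal NNReal

section Basics

variable {μ : Measure ℝ} {H : ℝ → ℝ}

lemma cdf_univ (hμ : ∀ b, μ (Set.Iic b) = ENNReal.ofReal (H b))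
    (htop : Tendsto H atTop (nhds 1)) : μ Set.univ = 1 := by
  refine tendsto_nhds_unique (tendsto_measure_Iic_atTop μ) ?_
  have : Tendsto (fun b => ENNReal.ofReal (H b)) atTop (nhds (ENNReal.ofReal 1)) :=
    (ENNReal.continuous_ofReal.tendsto 1).comp htop
  simpa [hμ] using this

lemma cdf_Ioc (hμ : ∀ b, μ (Set.Iic b) = ENNReal.ofReal (H b))
    {a b : ℝ} (hab : a ≤ b) (ha : 0 ≤ H a) :
    μ (Set.Ioc a b) = ENNReal.ofReal (H b - H a) := by
  have h1 : Set.Ioc a b = Set.Iic b \ Set.Iic a := by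
    ext t; simp [Set.mem_Ioc, Set.mem_diff, and_comm]
  have hfin : μ (Set.Iic a) ≠ ⊤ := by simp [hμ a]
  rw [h1, measure_diff (Set.Iic_subset_Iic.2 hab) nullMeasurableSet_Iic hfin, hμ a, hμ b,
    ENNReal.ofReal_sub (H b) ha]

lemma cdf_singleton (hmono : Monotone H) (hcont : Continuous H)
    (hμ : ∀ b, μ (Set.Iic b) = ENNReal.ofReal (H b)) (hnn : ∀ x, 0 ≤ H x) (a : ℝ) :
    μ {a} = 0 := by
  refine le_antisymm ?_ zero_le
  have key : ∀ ε : ℝ, 0 < ε → μ {a} ≤ ENNReal.ofReal ε := by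
    intro ε hε
    have hc : ContinuousAt H a := hcont.continuousAt
    rw [Metric.continuousAt_iff] at hc
    obtain ⟨δ, hδ, hδ'⟩ := hc ε hε
    have hsub : ({a} : Set ℝ) ⊆ Set.Ioc (a - δ/2) a := by
      intro t ht; simp at ht; subst ht; constructor <;> [linarith; rfl]
    calc μ {a} ≤ μ (Set.Ioc (a - δ/2) a) := measure_mono hsub
      _ = ENNReal.ofReal (H a - H (a - δ/2)) := cdf_Ioc hμ (by linarith) (hnn _)
      _ ≤ ENNReal.ofReal ε := by
          apply ENNReal.ofReal_le_ofReal
          have := hδ' (show dist (a - δ/2) a < δ by rw [Real.dist_eq]; rw [abs_of_nonpos] <;> linarith)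
          rw [Real.dist_eq] at this
          have h2 := hmono (show a - δ/2 ≤ a by linarith)
          rw [abs_of_nonpos (by linarith)] at this
          linarith
  have htend : Tendsto (fun n : ℕ => ENNReal.ofReal (1/(n+1))) atTop (nhds 0) := by
    rw [show (0:ENNReal) = ENNReal.ofReal 0 by simp]
    exact (ENNReal.continuous_ofReal.tendsto 0).comp tendsto_one_div_add_atTop_nhds_zero_nat
  exact ge_of_tendsto' htend (fun n => key _ (by positivity))

end Basics

section Parts

lemma cdf_Ioi {μ : Measure ℝ} {H : ℝ → ℝ} (hμ : ∀ b, μ (Set.Iic b) = ENNReal.ofReal (H b))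
    (htop : Tendsto H atTop (nhds 1)) (a : ℝ) (ha : 0 ≤ H a) :
    μ (Set.Ioi a) = ENNReal.ofReal (1 - H a) := by
  have huniv := cdf_univ hμ htop
  have : Set.Ioi a = Set.univ \ Set.Iic a := by ext t; simp
  rw [this, measure_diff (Set.subset_univ _) nullMeasurableSet_Iic (by simp [hμ a]), huniv,
    hμ a, ENNReal.ofReal_sub 1 ha, ENNReal.ofReal_one]

lemma parts (FF GG : ℝ → ℝ)
    (hFFmono : Monotone FF) (hFFcont : Continuous FF)
    (hFF0 : ∀ x ≤ (0 : ℝ), FF x = 0) (hFFtop : Tendsto FF atTop (nhds 1))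
    (hGGmono : Monotone GG) (hGGcont : Continuous GG)
    (hGG0 : ∀ x ≤ (0 : ℝ), GG x = 0) (hGGtop : Tendsto GG atTop (nhds 1))
    (hGGlt : ∀ z : ℝ, GG z < 1)
    (μF μG : Measure ℝ)
    (hμF : ∀ b, μF (Set.Iic b) = ENNReal.ofReal (FF b))
    (hμG : ∀ b, μG (Set.Iic b) = ENNReal.ofReal (GG b))
    (z : ℝ) (hz : 0 < z) :
    (∫ u in Set.Ioc (0:ℝ) z, (1 - GG u) ∂μF)
      = FF z * (1 - GG z) + ∫ v in Set.Ioc (0:ℝ) z, FF v ∂μG := by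
  have hFFnn : ∀ x, 0 ≤ FF x := fun x => by
    rcases le_or_gt x 0 with h | h
    · exact (hFF0 x h).ge
    · rw [← hFF0 0 le_rfl]; exact hFFmono h.le
  have hGGnn : ∀ x, 0 ≤ GG x := fun x => by
    rcases le_or_gt x 0 with h | h
    · exact (hGG0 x h).ge
    · rw [← hGG0 0 le_rfl]; exact hGGmono h.le
  haveI : IsProbabilityMeasure μF := ⟨cdf_univ hμF hFFtop⟩
  haveI : IsProbabilityMeasure μG := ⟨cdf_univ hμG hGGtop⟩
  -- ofReal of the two Bochner integrals
  have hint1 : IntegrableOn (fun u => 1 - GG u) (Set.Ioc 0 z) μF := by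
    refine Integrable.mono' (integrable_const 1) ((continuous_const.sub hGGcont).aestronglyMeasurable) ?_
    filter_upwards with u
    rw [Real.norm_eq_abs, abs_of_nonneg (by linarith [hGGnn u, (hGGlt u).le])]
    linarith [hGGnn u]
  have hint2 : IntegrableOn (fun v => FF v) (Set.Ioc 0 z) μG := by
    refine Integrable.mono' (integrable_const 1) (hFFcont.aestronglyMeasurable) ?_
    filter_upwards with u
    rw [Real.norm_eq_abs, abs_of_nonneg (hFFnn u)]
    exact hFFmono.ge_of_tendsto hFFtop u
  haveI : NullSingletonClass μF := ⟨cdf_singleton hFFmono hFFcont hμF hFFnn⟩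
  haveI : NullSingletonClass μG := ⟨cdf_singleton hGGmono hGGcont hμG hGGnn⟩
  have hIoo : ∀ v : ℝ, μF (Set.Ioo 0 v) = ENNReal.ofReal (FF v) := by
    intro v
    rcases le_or_gt v 0 with h | h
    · rw [Set.Ioo_eq_empty (by intro hlt; linarith), hFF0 v h]
      simp
    · rw [measure_congr Ioo_ae_eq_Ioc, cdf_Ioc hμF h.le (by rw [hFF0 0 le_rfl])]
      simp [hFF0 0 le_rfl]
  set S : Set (ℝ × ℝ) := {q : ℝ × ℝ | 0 < q.1 ∧ q.1 < q.2 ∧ q.2 ≤ z} with hSdef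
  have hSmeas : MeasurableSet S := by
    have : S = {q : ℝ × ℝ | 0 < q.1} ∩ ({q : ℝ × ℝ | q.1 < q.2} ∩ {q : ℝ × ℝ | q.2 ≤ z}) := by
      ext q; simp [hSdef, and_assoc]
    rw [this]
    exact (measurableSet_lt measurable_const measurable_fst).inter
      ((measurableSet_lt measurable_fst measurable_snd).inter
        (measurableSet_le measurable_snd measurable_const))
  have h1 : ∀ u : ℝ, (Set.Ioc (0:ℝ) z).indicator (fun u => μG (Set.Ioc u z)) u
      = ∫⁻ v, S.indicator (1 : ℝ × ℝ → ℝ≥0∞) (u, v) ∂μG := by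
    intro u
    by_cases hu0 : 0 < u
    · have hset : (fun v => S.indicator (1 : ℝ × ℝ → ℝ≥0∞) (u, v)) = (Set.Ioc u z).indicator 1 := by
        funext v
        rw [Set.indicator_apply, Set.indicator_apply]
        refine if_congr ?_ rfl rfl
        simp [hSdef, Set.mem_Ioc, hu0]
      rw [hset, lintegral_indicator_one measurableSet_Ioc]
      by_cases huz : u ≤ z
      · rw [Set.indicator_of_mem (Set.mem_Ioc.2 ⟨hu0, huz⟩)]
      · rw [Set.indicator_of_notMem (fun hmem => huz (Set.mem_Ioc.1 hmem).2),
          Set.Ioc_eq_empty (fun h => huz h.le), measure_empty]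
    · have hset : (fun v => S.indicator (1 : ℝ × ℝ → ℝ≥0∞) (u, v)) = (∅ : Set ℝ).indicator 1 := by
        funext v
        rw [Set.indicator_apply, Set.indicator_apply]
        refine if_congr ?_ rfl rfl
        simp [hSdef, hu0]
      rw [hset, Set.indicator_empty, lintegral_zero,
        Set.indicator_of_notMem (fun hmem => hu0 (Set.mem_Ioc.1 hmem).1)]
  have h2 : ∀ v : ℝ, (∫⁻ u, S.indicator (1 : ℝ × ℝ → ℝ≥0∞) (u, v) ∂μF)
      = (Set.Iic z).indicator (fun v => ENNReal.ofReal (FF v)) v := by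
    intro v
    by_cases hvz : v ≤ z
    · have hset : (fun u => S.indicator (1 : ℝ × ℝ → ℝ≥0∞) (u, v)) = (Set.Ioo (0:ℝ) v).indicator 1 := by
        funext u
        rw [Set.indicator_apply, Set.indicator_apply]
        refine if_congr ?_ rfl rfl
        simp [hSdef, Set.mem_Ioo, hvz, and_assoc]
      rw [hset, lintegral_indicator_one measurableSet_Ioo, hIoo v,
        Set.indicator_of_mem (Set.mem_Iic.2 hvz)]
    · have hset : (fun u => S.indicator (1 : ℝ × ℝ → ℝ≥0∞) (u, v)) = (∅ : Set ℝ).indicator 1 := by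
        funext u
        rw [Set.indicator_apply, Set.indicator_apply]
        refine if_congr ?_ rfl rfl
        simp only [hSdef, Set.mem_setOf_eq, Set.mem_empty_iff_false, iff_false]
        rintro ⟨-, -, h⟩; exact hvz h
      rw [hset, Set.indicator_empty, lintegral_zero,
        Set.indicator_of_notMem (fun hmem => hvz (Set.mem_Iic.1 hmem))]
  have hswap : ∫⁻ u in Set.Ioc (0:ℝ) z, ENNReal.ofReal (GG z - GG u) ∂μF
      = ∫⁻ v in Set.Ioc (0:ℝ) z, ENNReal.ofReal (FF v) ∂μG := by
    have hmble : AEMeasurable (Function.uncurry fun u v => S.indicator (1 : ℝ × ℝ → ℝ≥0∞) (u, v)) (μF.prod μG) := by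
      have : (Function.uncurry fun u v => S.indicator (1 : ℝ × ℝ → ℝ≥0∞) (u, v)) = S.indicator 1 := by
        funext q; rfl
      rw [this]
      exact (measurable_const.indicator hSmeas).aemeasurable
    calc ∫⁻ u in Set.Ioc (0:ℝ) z, ENNReal.ofReal (GG z - GG u) ∂μF
        = ∫⁻ u in Set.Ioc (0:ℝ) z, μG (Set.Ioc u z) ∂μF := by
          refine setLIntegral_congr_fun measurableSet_Ioc ?_
          intro u hu
          dsimp only
          rw [cdf_Ioc hμG hu.2 (hGGnn u)]
      _ = ∫⁻ u, (Set.Ioc (0:ℝ) z).indicator (fun u => μG (Set.Ioc u z)) u ∂μF := by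
          rw [lintegral_indicator measurableSet_Ioc]
      _ = ∫⁻ u, ∫⁻ v, S.indicator (1 : ℝ × ℝ → ℝ≥0∞) (u, v) ∂μG ∂μF := by
          exact lintegral_congr h1
      _ = ∫⁻ v, ∫⁻ u, S.indicator (1 : ℝ × ℝ → ℝ≥0∞) (u, v) ∂μF ∂μG := lintegral_lintegral_swap hmble
      _ = ∫⁻ v, (Set.Iic z).indicator (fun v => ENNReal.ofReal (FF v)) v ∂μG :=
          lintegral_congr h2
      _ = ∫⁻ v in Set.Iic z, ENNReal.ofReal (FF v) ∂μG := by
          rw [lintegral_indicator measurableSet_Iic]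
      _ = ∫⁻ v in Set.Iic 0 ∪ Set.Ioc 0 z, ENNReal.ofReal (FF v) ∂μG := by
          rw [Set.Iic_union_Ioc_eq_Iic hz.le]
      _ = ∫⁻ v in Set.Iic 0, ENNReal.ofReal (FF v) ∂μG
            + ∫⁻ v in Set.Ioc (0:ℝ) z, ENNReal.ofReal (FF v) ∂μG := by
          rw [lintegral_union measurableSet_Ioc (Set.Iic_disjoint_Ioc le_rfl)]
      _ = ∫⁻ v in Set.Ioc (0:ℝ) z, ENNReal.ofReal (FF v) ∂μG := by
          have : ∫⁻ v in Set.Iic 0, ENNReal.ofReal (FF v) ∂μG = 0 := by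
            rw [setLIntegral_congr_fun measurableSet_Iic
              (by intro v hv; dsimp only; rw [hFF0 v hv]; simp : EqOn (fun v => ENNReal.ofReal (FF v)) (fun _ => 0) (Set.Iic 0))]
            simp
          rw [this, zero_add]
  -- now ofReal equalities
  have hGz1 : 0 ≤ 1 - GG z := by linarith [(hGGlt z).le]
  have hA : ENNReal.ofReal (∫ u in Set.Ioc (0:ℝ) z, (1 - GG u) ∂μF)
      = ∫⁻ u in Set.Ioc (0:ℝ) z, ENNReal.ofReal (GG z - GG u) ∂μF
        + ENNReal.ofReal ((1 - GG z) * FF z) := by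
    rw [MeasureTheory.ofReal_integral_eq_lintegral_ofReal hint1
      (by filter_upwards with u; simp; linarith [(hGGlt u).le])]
    calc ∫⁻ u in Set.Ioc (0:ℝ) z, ENNReal.ofReal (1 - GG u) ∂μF
        = ∫⁻ u in Set.Ioc (0:ℝ) z,
            (ENNReal.ofReal (GG z - GG u) + ENNReal.ofReal (1 - GG z)) ∂μF := by
          refine setLIntegral_congr_fun measurableSet_Ioc ?_
          intro u hu
          dsimp only
          rw [← ENNReal.ofReal_add (by linarith [hGGmono hu.2]) hGz1]
          ring_nf
      _ = ∫⁻ u in Set.Ioc (0:ℝ) z, ENNReal.ofReal (GG z - GG u) ∂μF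
            + ENNReal.ofReal (1 - GG z) * μF (Set.Ioc 0 z) := by
          rw [lintegral_add_right _ measurable_const, setLIntegral_const]
      _ = ∫⁻ u in Set.Ioc (0:ℝ) z, ENNReal.ofReal (GG z - GG u) ∂μF
            + ENNReal.ofReal ((1 - GG z) * FF z) := by
          rw [cdf_Ioc hμF hz.le (by rw [hFF0 0 le_rfl]), hFF0 0 le_rfl, sub_zero,
            ENNReal.ofReal_mul hGz1]
  have hB : ENNReal.ofReal (∫ v in Set.Ioc (0:ℝ) z, FF v ∂μG)
      = ∫⁻ v in Set.Ioc (0:ℝ) z, ENNReal.ofReal (FF v) ∂μG :=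
    MeasureTheory.ofReal_integral_eq_lintegral_ofReal hint2
      (by filter_upwards with v; exact hFFnn v)
  have hfinal : ENNReal.ofReal (∫ u in Set.Ioc (0:ℝ) z, (1 - GG u) ∂μF)
      = ENNReal.ofReal ((∫ v in Set.Ioc (0:ℝ) z, FF v ∂μG) + (1 - GG z) * FF z) := by
    rw [hA, hswap, ← hB, ← ENNReal.ofReal_add
      (integral_nonneg (fun v => hFFnn v)) (mul_nonneg hGz1 (hFFnn z))]
  have h1' : (∫ u in Set.Ioc (0:ℝ) z, (1 - GG u) ∂μF)
      = (∫ v in Set.Ioc (0:ℝ) z, FF v ∂μG) + (1 - GG z) * FF z := by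
    have hA0 : 0 ≤ ∫ u in Set.Ioc (0:ℝ) z, (1 - GG u) ∂μF :=
      integral_nonneg (fun u => by simp; linarith [(hGGlt u).le])
    have hB0 : 0 ≤ (∫ v in Set.Ioc (0:ℝ) z, FF v ∂μG) + (1 - GG z) * FF z :=
      add_nonneg (integral_nonneg (fun v => hFFnn v)) (mul_nonneg hGz1 (hFFnn z))
    exact (ENNReal.ofReal_eq_ofReal_iff hA0 hB0).1 hfinal
  rw [h1']; ring

end Parts

section LogLemma

lemma level_set (FF : ℝ → ℝ) (hFFmono : Monotone FF) (hFFcont : Continuous FF)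
    (hFFtop : Tendsto FF atTop (nhds 1)) {x c : ℝ} (hxc : FF x ≤ c) (hc1 : c < 1) :
    ∃ a : ℝ, x ≤ a ∧ FF a = c ∧ {z : ℝ | FF z ≤ c} = Set.Iic a := by
  set A := {z : ℝ | FF z ≤ c} with hA
  have hxA : x ∈ A := hxc
  have hbdd : BddAbove A := by
    obtain ⟨N, hN⟩ := (hFFtop.eventually (eventually_gt_nhds hc1)).exists
    exact ⟨N, fun z hz => by
      by_contra hzN
      push_neg at hzN
      exact absurd (lt_of_lt_of_le hN (hFFmono hzN.le)) (not_lt.2 hz)⟩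
  have hclosed : IsClosed A := isClosed_Iic.preimage hFFcont
  have haA : sSup A ∈ A := hclosed.csSup_mem ⟨x, hxA⟩ hbdd
  set a := sSup A with ha
  have hFa_le : FF a ≤ c := haA
  have hFa_ge : c ≤ FF a := by
    by_contra h
    push_neg at h
    obtain ⟨b, hba, hbc⟩ := ((hFFcont.tendsto a).eventually (eventually_lt_nhds h)).exists_gt
    exact absurd (le_csSup hbdd (hbc.le : b ∈ A)) (not_le.2 hba)
  refine ⟨a, le_csSup hbdd hxA, le_antisymm hFa_le hFa_ge, ?_⟩
  ext z
  constructor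
  · exact fun hz => le_csSup hbdd hz
  · intro hz
    exact le_trans (hFFmono hz) hFa_le

lemma map_is_uniform (FF : ℝ → ℝ) (hFFmono : Monotone FF) (hFFcont : Continuous FF)
    (hFF0 : ∀ x ≤ (0 : ℝ), FF x = 0) (hFFtop : Tendsto FF atTop (nhds 1))
    (hFFlt : ∀ z : ℝ, FF z < 1)
    (μF : Measure ℝ) (hμF : ∀ b, μF (Set.Iic b) = ENNReal.ofReal (FF b))
    (x : ℝ) :
    (μF.restrict (Set.Ioi x)).map FF = volume.restrict (Set.Ioc (FF x) 1) := by
  have hFFnn : ∀ t, 0 ≤ FF t := fun t => by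
    rcases le_or_gt t 0 with h | h
    · exact (hFF0 t h).ge
    · rw [← hFF0 0 le_rfl]; exact hFFmono h.le
  haveI : IsProbabilityMeasure μF := ⟨cdf_univ hμF hFFtop⟩
  haveI : IsFiniteMeasure (μF.restrict (Set.Ioi x)) := inferInstance
  refine Measure.ext_of_Iic _ _ (fun c => ?_)
  rw [Measure.map_apply hFFcont.measurable measurableSet_Iic,
    Measure.restrict_apply (hFFcont.measurable measurableSet_Iic),
    Measure.restrict_apply measurableSet_Iic]
  rcases lt_or_ge c (FF x) with hc | hc
  · have h1 : FF ⁻¹' Set.Iic c ∩ Set.Ioi x = ∅ := by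
      ext z
      simp only [Set.mem_inter_iff, Set.mem_preimage, Set.mem_Iic, Set.mem_Ioi,
        Set.mem_empty_iff_false, iff_false, not_and]
      intro hz hzx
      exact absurd (le_trans (hFFmono hzx.le) hz) (not_le.2 hc)
    have h2 : Set.Iic c ∩ Set.Ioc (FF x) 1 = ∅ := by
      ext u
      simp only [Set.mem_inter_iff, Set.mem_Iic, Set.mem_Ioc, Set.mem_empty_iff_false,
        iff_false, not_and]
      intro hu h3
      intro _
      linarith
    rw [h1, h2, measure_empty, measure_empty]
  · rcases lt_or_ge c 1 with hc1 | hc1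
    · obtain ⟨a, hxa, hFa, hset⟩ := level_set FF hFFmono hFFcont hFFtop hc hc1
      have h1 : FF ⁻¹' Set.Iic c ∩ Set.Ioi x = Set.Ioc x a := by
        have : FF ⁻¹' Set.Iic c = {z : ℝ | FF z ≤ c} := rfl
        rw [this, hset]
        ext z; simp [Set.mem_Ioc, and_comm]
      have h2 : Set.Iic c ∩ Set.Ioc (FF x) 1 = Set.Ioc (FF x) c := by
        ext u
        simp only [Set.mem_inter_iff, Set.mem_Iic, Set.mem_Ioc]
        constructor
        · rintro ⟨h3, h4, h5⟩; exact ⟨h4, h3⟩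
        · rintro ⟨h4, h5⟩; exact ⟨h5, h4, le_trans h5 hc1.le⟩
      rw [h1, h2, cdf_Ioc hμF hxa (hFFnn x), hFa, Real.volume_Ioc]
    · have h1 : FF ⁻¹' Set.Iic c ∩ Set.Ioi x = Set.Ioi x := by
        ext z
        simp only [Set.mem_inter_iff, Set.mem_preimage, Set.mem_Iic, Set.mem_Ioi,
          and_iff_right_iff_imp]
        exact fun _ => le_trans (hFFlt z).le hc1
      have h2 : Set.Iic c ∩ Set.Ioc (FF x) 1 = Set.Ioc (FF x) 1 := by
        ext u
        simp only [Set.mem_inter_iff, Set.mem_Iic, Set.mem_Ioc, and_iff_right_iff_imp]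
        exact fun h3 => le_trans h3.2 hc1
      rw [h1, h2, cdf_Ioi hμF hFFtop x (hFFnn x), Real.volume_Ioc]

lemma log_integral (FF : ℝ → ℝ) (hFFmono : Monotone FF) (hFFcont : Continuous FF)
    (hFF0 : ∀ x ≤ (0 : ℝ), FF x = 0) (hFFtop : Tendsto FF atTop (nhds 1))
    (hFFlt : ∀ z : ℝ, FF z < 1)
    (μF : Measure ℝ) (hμF : ∀ b, μF (Set.Iic b) = ENNReal.ofReal (FF b))
    (x : ℝ) (hx : 0 < FF x) :
    (∫ z in Set.Ioi x, 1 / FF z ∂μF) = -Real.log (FF x) := by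
  have hmap := map_is_uniform FF hFFmono hFFcont hFF0 hFFtop hFFlt μF hμF x
  have h1 : (∫ z in Set.Ioi x, (FF z)⁻¹ ∂μF) = ∫ u, u⁻¹ ∂((μF.restrict (Set.Ioi x)).map FF) := by
    rw [integral_map hFFcont.measurable.aemeasurable measurable_inv.aestronglyMeasurable]
  simp only [one_div]
  rw [h1, hmap]
  have h2 : (∫ u in Set.Ioc (FF x) 1, u⁻¹) = ∫ u in (FF x)..1, u⁻¹ := by
    rw [intervalIntegral.integral_of_le (hFFlt x).le]
  rw [h2, integral_inv_of_pos hx one_pos, Real.log_div one_ne_zero (ne_of_gt hx), Real.log_one,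
    zero_sub]

end LogLemma

section Density

lemma density_lemma (GG : ℝ → ℝ)
    (hGGmono : Monotone GG) (hGGcont : Continuous GG)
    (hGG0 : ∀ x ≤ (0 : ℝ), GG x = 0) (hGGlt : ∀ z : ℝ, GG z < 1)
    (μF : Measure ℝ) [IsProbabilityMeasure μF]
    (p : ℝ) (hppos : 0 < p)
    (F : ℝ → ℝ)
    (hF : ∀ x, F x = p⁻¹ * ∫ z in Set.Ioc (0 : ℝ) x, (1 - GG z) ∂μF)
    (μFo : Measure ℝ) (hμFo : ∀ b, μFo (Set.Iic b) = ENNReal.ofReal (F b)) :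
    μFo = μF.withDensity (fun z =>
      (((Set.Ioi (0:ℝ)).indicator (fun z => (p⁻¹ * (1 - GG z)).toNNReal) z : ℝ≥0) : ℝ≥0∞)) := by
  have hGGnn : ∀ x, 0 ≤ GG x := fun x => by
    rcases le_or_gt x 0 with h | h
    · exact (hGG0 x h).ge
    · rw [← hGG0 0 le_rfl]; exact hGGmono h.le
  set f : ℝ → ℝ≥0 := fun z => (Set.Ioi (0:ℝ)).indicator (fun z => (p⁻¹ * (1 - GG z)).toNNReal) z
    with hfdef
  have hcoe : ∀ z, ((f z : ℝ≥0) : ℝ≥0∞)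
      = (Set.Ioi (0:ℝ)).indicator (fun z => ENNReal.ofReal (p⁻¹ * (1 - GG z))) z := by
    intro z
    by_cases hz : z ∈ Set.Ioi (0:ℝ)
    · rw [hfdef]; simp only [Set.indicator_of_mem hz]; rfl
    · rw [hfdef]; simp only [Set.indicator_of_notMem hz]; rfl
  have hbound : ∀ z, ((f z : ℝ≥0) : ℝ≥0∞) ≤ ENNReal.ofReal p⁻¹ := by
    intro z
    rw [hcoe z]
    refine le_trans (Set.indicator_le_self' (fun _ _ => zero_le) z) ?_
    exact ENNReal.ofReal_le_ofReal (by nlinarith [hGGnn z, inv_pos.2 hppos])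
  haveI hfin : IsFiniteMeasure (μF.withDensity (fun z => ((f z : ℝ≥0) : ℝ≥0∞))) := by
    constructor
    rw [withDensity_apply _ MeasurableSet.univ, Measure.restrict_univ]
    calc ∫⁻ z, ((f z : ℝ≥0) : ℝ≥0∞) ∂μF ≤ ∫⁻ _, ENNReal.ofReal p⁻¹ ∂μF :=
          lintegral_mono hbound
      _ = ENNReal.ofReal p⁻¹ * μF Set.univ := lintegral_const _
      _ < ⊤ := by
          rw [measure_univ]
          simp [ENNReal.ofReal_lt_top]
  refine (Measure.ext_of_Iic (μF.withDensity (fun z => ((f z : ℝ≥0) : ℝ≥0∞))) μFo (fun b => ?_)).symm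
  rw [hμFo b, withDensity_apply _ measurableSet_Iic]
  have hint : IntegrableOn (fun z => p⁻¹ * (1 - GG z)) (Set.Ioc 0 b) μF := by
    refine Integrable.mono' (integrable_const p⁻¹)
      ((continuous_const.mul (continuous_const.sub hGGcont)).aestronglyMeasurable) ?_
    filter_upwards with u
    rw [Real.norm_eq_abs, abs_of_nonneg (by nlinarith [hGGnn u, inv_pos.2 hppos, (hGGlt u).le])]
    nlinarith [hGGnn u, inv_pos.2 hppos]
  calc ∫⁻ z in Set.Iic b, ((f z : ℝ≥0) : ℝ≥0∞) ∂μF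
      = ∫⁻ z, (Set.Ioi (0:ℝ)).indicator (fun z => ENNReal.ofReal (p⁻¹ * (1 - GG z))) z
          ∂(μF.restrict (Set.Iic b)) := by
        exact lintegral_congr (fun z => by rw [hcoe z])
    _ = ∫⁻ z in Set.Ioi 0, ENNReal.ofReal (p⁻¹ * (1 - GG z)) ∂(μF.restrict (Set.Iic b)) := by
        rw [lintegral_indicator measurableSet_Ioi]
    _ = ∫⁻ z in Set.Ioi 0 ∩ Set.Iic b, ENNReal.ofReal (p⁻¹ * (1 - GG z)) ∂μF := by
        rw [Measure.restrict_restrict measurableSet_Ioi]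
    _ = ∫⁻ z in Set.Ioc 0 b, ENNReal.ofReal (p⁻¹ * (1 - GG z)) ∂μF := by
        rw [Set.Ioi_inter_Iic]
    _ = ENNReal.ofReal (∫ z in Set.Ioc (0:ℝ) b, p⁻¹ * (1 - GG z) ∂μF) := by
        rw [MeasureTheory.ofReal_integral_eq_lintegral_ofReal hint
          (by filter_upwards with u; simp only [Pi.zero_apply]; nlinarith [hGGnn u, inv_pos.2 hppos, (hGGlt u).le])]
    _ = ENNReal.ofReal (F b) := by
        rw [hF b, MeasureTheory.integral_const_mul]

end Density


/-- Woodroofe's identity: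
`∫_{(x,∞)} (1/𝐅) dμ_𝐅 = ∫_{(x,∞)} (1/C) dμ_F` for every `x > 0` with `𝐅(x) > 0`,
where `C := F − G`; consequently `𝐅(x) = exp(−∫_{(x,∞)} (1/C) dμ_F)`. -/
theorem woodroofe_identity
    (FF GG : ℝ → ℝ)
    (hFFmono : Monotone FF) (hFFcont : Continuous FF)
    (hFF0 : ∀ x ≤ (0 : ℝ), FF x = 0) (hFFtop : Tendsto FF atTop (nhds 1))
    (hGGmono : Monotone GG) (hGGcont : Continuous GG)
    (hGG0 : ∀ x ≤ (0 : ℝ), GG x = 0) (hGGtop : Tendsto GG atTop (nhds 1))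
    (hFFlt : ∀ z : ℝ, FF z < 1) (hGGlt : ∀ z : ℝ, GG z < 1)
    (μF μG : Measure ℝ)
    (hμF : ∀ b, μF (Set.Iic b) = ENNReal.ofReal (FF b))
    (hμG : ∀ b, μG (Set.Iic b) = ENNReal.ofReal (GG b))
    (p : ℝ) (hp : p = ∫ z in Set.Ioi (0 : ℝ), (1 - GG z) ∂μF) (hppos : 0 < p)
    (F G : ℝ → ℝ)
    (hF : ∀ x, F x = p⁻¹ * ∫ z in Set.Ioc (0 : ℝ) x, (1 - GG z) ∂μF)
    (hG : ∀ y, G y = p⁻¹ * ∫ z in Set.Ioc (0 : ℝ) y, FF z ∂μG)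
    (μFo : Measure ℝ) (hμFo : ∀ b, μFo (Set.Iic b) = ENNReal.ofReal (F b)) :
    ∀ x > (0 : ℝ), 0 < FF x →
      (∫ z in Set.Ioi x, 1 / FF z ∂μF) = (∫ z in Set.Ioi x, 1 / (F z - G z) ∂μFo) ∧
      FF x = Real.exp (-∫ z in Set.Ioi x, 1 / (F z - G z) ∂μFo) := by
  intro x hx hFFx
  haveI : IsProbabilityMeasure μF := ⟨cdf_univ hμF hFFtop⟩
  set f : ℝ → ℝ≥0 := fun z => (Set.Ioi (0:ℝ)).indicator (fun z => (p⁻¹ * (1 - GG z)).toNNReal) z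
    with hfdef
  have hfmeas : Measurable f :=
    ((measurable_const.mul (measurable_const.sub hGGcont.measurable)).real_toNNReal).indicator
      measurableSet_Ioi
  have hwd := density_lemma GG hGGmono hGGcont hGG0 hGGlt μF p hppos F hF μFo hμFo
  have hC : ∀ z, x < z → F z - G z = p⁻¹ * (FF z * (1 - GG z)) := by
    intro z hz
    have hz0 : (0:ℝ) < z := lt_trans hx hz
    have hparts := parts FF GG hFFmono hFFcont hFF0 hFFtop hGGmono hGGcont hGG0 hGGtop hGGlt
      μF μG hμF hμG z hz0
    rw [hF z, hG z, hparts]; ring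
  have key : (∫ z in Set.Ioi x, 1 / (F z - G z) ∂μFo) = ∫ z in Set.Ioi x, 1 / FF z ∂μF := by
    rw [hwd, setIntegral_withDensity_eq_setIntegral_smul hfmeas _ measurableSet_Ioi]
    refine setIntegral_congr_fun measurableSet_Ioi (fun z hz => ?_)
    have hz0 : (0:ℝ) < z := lt_trans hx hz
    have hFz : 0 < FF z := lt_of_lt_of_le hFFx (hFFmono (le_of_lt hz))
    have hGz : 0 < 1 - GG z := by linarith [hGGlt z]
    have hfz : f z = (p⁻¹ * (1 - GG z)).toNNReal := by
      rw [hfdef]; simp [Set.indicator_of_mem (Set.mem_Ioi.2 hz0)]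
    have hp0 : (0:ℝ) < p⁻¹ := inv_pos.2 hppos
    rw [hfz, NNReal.smul_def, Real.coe_toNNReal _ (by positivity), hC z hz]
    rw [one_div, one_div, mul_inv, mul_inv, smul_eq_mul]
    field_simp
  have hlog := log_integral FF hFFmono hFFcont hFF0 hFFtop hFFlt μF hμF x hFFx
  exact ⟨key.symm, by rw [key, hlog, neg_neg, Real.exp_log hFFx]⟩
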